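/- Let v be a vertex of a looped simple graph G. Then the isotropic matroid of the vertex-deleted graph G−v equals the minor of M(IAS(G)) obtained by contracting the element (v,φ) and deleting the elements (v,χ) and (v,ψ): M(IAS(G−v)) = (M(IAS(G))/(v,φ)) − (v,χ) − (v,ψ). -/

import Mathlib

/-- The three column types of the matrix `IAS(G) = (I | A | I+A)`. -/
inductive GType : Type
  | phi | chi | psi
  deriving DecidableEq

instance instFintypeGType : Fintype GType :=
  ⟨{GType.phi, GType.chi, GType.psi}, fun x => by cases x <;> simp⟩

/-- The column of `IAS(G) = (I | A(G) | I+A(G))` indexed by a ground set element of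
`W(G) = V × {φ, χ, ψ}`. -/
def iasCol {V : Type} [DecidableEq V] (A : Matrix V V (ZMod 2)) : V × GType → V → ZMod 2
  | (v, GType.phi) => fun w => if w = v then 1 else 0
  | (v, GType.chi) => fun w => A w v
  | (v, GType.psi) => fun w => (if w = v then 1 else 0) + A w v

/-- Independence in the binary matroid `M(IAS(G))`: a set of ground elements is independent
iff the corresponding columns of `IAS(G)` are linearly independent over `GF(2)`. -/
def IasIndep {V : Type} [DecidableEq V] (A : Matrix V V (ZMod 2))
    (S : Set (V × GType)) : Prop :=
  LinearIndependent (ZMod 2) (fun p : S => iasCol A p.1)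

/-- A circuit of `M(IAS(G))`: a minimal dependent set. -/
def IasCircuit {V : Type} [DecidableEq V] (A : Matrix V V (ZMod 2))
    (C : Set (V × GType)) : Prop :=
  ¬ IasIndep A C ∧ ∀ D : Set (V × GType), D ⊂ C → IasIndep A D

/-- The rank of a subset of the ground set of `M(IAS(G))`: the `GF(2)`-rank of the
corresponding set of columns of `IAS(G)`. -/
noncomputable def iasRk {V : Type} [Fintype V] [DecidableEq V] (A : Matrix V V (ZMod 2))
    (S : Set (V × GType)) : ℕ :=
  Module.finrank (ZMod 2) (Submodule.span (ZMod 2) (iasCol A '' S))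

/-- `M(IAS(G−v)) = (M(IAS(G))/(v,φ)) − (v,χ) − (v,ψ)`.  The minor on the
right has ground set `W(G−v) = (V∖{v}) × {φ,χ,ψ}` and rank function
`r'(S) = r(S ∪ {(v,φ)}) − 1`; we assert that this is the rank function of
`M(IAS(G−v))`. -/
theorem vertex_deletion_minor {V : Type} [Fintype V] [DecidableEq V]
    (A : Matrix V V (ZMod 2)) (hA : A.IsSymm) (v : V) :
    ∀ S : Set ({w : V // w ≠ v} × GType),
      iasRk (A.submatrix (Subtype.val : {w : V // w ≠ v} → V) Subtype.val) S + 1 =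
        iasRk A
          (insert (v, GType.phi)
            ((fun p : {w : V // w ≠ v} × GType => ((p.1 : V), p.2)) '' S)) := by
  classical
  intro S
  set A' := A.submatrix (Subtype.val : {w : V // w ≠ v} → V) Subtype.val with hA'
  set π : (V → ZMod 2) →ₗ[ZMod 2] ({w : V // w ≠ v} → ZMod 2) :=
    LinearMap.funLeft (ZMod 2) (ZMod 2) Subtype.val with hπdef
  set e : V → ZMod 2 := iasCol A (v, GType.phi) with he
  set ι : {w : V // w ≠ v} × GType → V × GType := fun p => ((p.1 : V), p.2) with hι
  -- columns of A' are restrictions of columns of A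
  have hcol : ∀ p : {w : V // w ≠ v} × GType, iasCol A' p = π (iasCol A (ι p)) := by
    rintro ⟨w, t⟩
    cases t <;> funext u <;>
      simp [iasCol, hπdef, LinearMap.funLeft, hA', Matrix.submatrix, hι, Subtype.val_inj]
  have heval : ∀ u, e u = if u = v then 1 else 0 := fun u => rfl
  have hπe : π e = 0 := by
    funext u
    simp [hπdef, LinearMap.funLeft, heval, u.2]
  -- kernel of π is spanned by e
  have hker : LinearMap.ker π = Submodule.span (ZMod 2) {e} := by
    ext f
    simp only [LinearMap.mem_ker, Submodule.mem_span_singleton]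
    constructor
    · intro hf
      refine ⟨f v, funext fun u => ?_⟩
      by_cases hu : u = v
      · subst hu; simp [heval]
      · have h1 : f u = 0 := congrFun hf ⟨u, hu⟩
        simp [heval, hu, h1]
    · rintro ⟨c, rfl⟩
      funext u
      simp [hπdef, LinearMap.funLeft, heval, u.2]
  set W := Submodule.span (ZMod 2) (iasCol A '' insert (v, GType.phi) (ι '' S)) with hW
  have hmem : e ∈ W :=
    Submodule.subset_span ⟨(v, GType.phi), Set.mem_insert _ _, rfl⟩
  have hle : LinearMap.ker π ≤ W := by
    rw [hker]
    exact Submodule.span_le.2 (by simpa using hmem)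
  have hmap : W.map π = Submodule.span (ZMod 2) (iasCol A' '' S) := by
    rw [hW, Submodule.map_span, Set.image_insert_eq, Set.image_insert_eq, hπe,
      Submodule.span_insert_zero, Set.image_image, Set.image_image]
    congr 1
    exact Set.image_congr fun p _ => (hcol p).symm
  -- rank-nullity for π restricted to W
  have hrn := LinearMap.finrank_range_add_finrank_ker (π.domRestrict W)
  have hrange : LinearMap.range (π.domRestrict W) = W.map π := by
    rw [LinearMap.range_domRestrict]
  have hkerres : LinearMap.ker (π.domRestrict W) =
      Submodule.comap W.subtype (LinearMap.ker π) := by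
    ext x; simp [LinearMap.domRestrict]
  have hkerdim : Module.finrank (ZMod 2) (LinearMap.ker (π.domRestrict W)) = 1 := by
    rw [hkerres]
    have hequiv := Submodule.comapSubtypeEquivOfLe hle
    rw [hequiv.finrank_eq, hker]
    refine finrank_span_singleton ?_
    intro h0
    have : e v = 0 := by rw [h0]; rfl
    simp [heval] at this
  have hWdim : Module.finrank (ZMod 2) W =
      Module.finrank (ZMod 2) (W.map π) + 1 := by
    rw [← hrn, hrange, hkerdim]
  show iasRk A' S + 1 = _
  rw [iasRk, iasRk, ← hmap, hWdim]
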